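/- arXiv:2506.15654 — 5 statements merged into one kernel-verified Lean document; each statement's English description precedes it below -/
import Mathlib

section
/- Let A be a finite nonempty set, πβ a strictly positive probability mass function on A, A_adv : A → ℝ, λ > 0. Define π*(a) = exp(A_adv(a)/λ)/Z with Z = Σ_a exp(A_adv(a)/λ), and π*β(a) = πβ(a)·exp(A_adv(a)/λ)/Zβ with Zβ = Σ_a πβ(a)·exp(A_adv(a)/λ). Then D_KL(π*‖π*β) ≥ H(π*, πβ) − H(πβ, π*), where H(p, q) = −Σ_a p(a)·log q(a) denotes cross-entropy and D_KL(p‖q) = Σ_a p(a)·log(p(a)/q(a)). -/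
open Finset

theorem kl_lower_bound_constrained_vs_unbiased
    {A : Type*} [Fintype A] [Nonempty A]
    (pb : A → ℝ) (hpos : ∀ a, 0 < pb a) (hsum : ∑ a, pb a = 1)
    (Aadv : A → ℝ) (lam : ℝ) (hlam : 0 < lam)
    (Z : ℝ) (hZ : Z = ∑ a, Real.exp (Aadv a / lam))
    (Zb : ℝ) (hZb : Zb = ∑ a, pb a * Real.exp (Aadv a / lam))
    (ps : A → ℝ) (hps : ∀ a, ps a = Real.exp (Aadv a / lam) / Z)
    (psb : A → ℝ) (hpsb : ∀ a, psb a = pb a * Real.exp (Aadv a / lam) / Zb) :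
    ∑ a, ps a * Real.log (ps a / psb a) ≥
      (-∑ a, ps a * Real.log (pb a)) - (-∑ a, pb a * Real.log (ps a)) := by
  set f : A → ℝ := fun a => Aadv a / lam with hf
  have hZpos : 0 < Z := by
    rw [hZ]; exact Finset.sum_pos (fun a _ => Real.exp_pos _) univ_nonempty
  have hZbpos : 0 < Zb := by
    rw [hZb]
    exact Finset.sum_pos (fun a _ => mul_pos (hpos a) (Real.exp_pos _)) univ_nonempty
  have hpssum : ∑ a, ps a = 1 := by
    have : ∑ a, ps a = (∑ a, Real.exp (f a)) / Z := by
      rw [Finset.sum_div]; exact Finset.sum_congr rfl fun a _ => hps a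
    rw [this, ← hZ, div_self hZpos.ne']
  have hlogps : ∀ a, Real.log (ps a) = f a - Real.log Z := by
    intro a
    rw [hps a, Real.log_div (Real.exp_pos _).ne' hZpos.ne', Real.log_exp]
  have hlograt : ∀ a, Real.log (ps a / psb a)
      = Real.log Zb - Real.log Z - Real.log (pb a) := by
    intro a
    have h1 : ps a / psb a = Zb / (Z * pb a) := by
      rw [hps a, hpsb a]
      field_simp
    rw [h1, Real.log_div hZbpos.ne' (mul_pos hZpos (hpos a)).ne',
      Real.log_mul hZpos.ne' (hpos a).ne']
    ring
  -- Jensen: exp (∑ pb f) ≤ ∑ pb exp f = Zb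
  have hjensen : ∑ a, pb a * f a ≤ Real.log Zb := by
    rw [Real.le_log_iff_exp_le hZbpos, hZb]
    have := (convexOn_exp).map_sum_le (t := (univ : Finset A)) (w := pb)
      (p := f) (fun a _ => (hpos a).le) hsum (fun a _ => Set.mem_univ _)
    simpa [smul_eq_mul] using this
  have hLHS : ∑ a, ps a * Real.log (ps a / psb a)
      = Real.log Zb - Real.log Z - ∑ a, ps a * Real.log (pb a) := by
    have : ∑ a, ps a * Real.log (ps a / psb a)
        = ∑ a, (ps a * (Real.log Zb - Real.log Z) - ps a * Real.log (pb a)) := by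
      refine Finset.sum_congr rfl fun a _ => ?_
      rw [hlograt a]; ring
    rw [this, Finset.sum_sub_distrib, ← Finset.sum_mul, hpssum, one_mul]
  have hRHS : ∑ a, pb a * Real.log (ps a) = (∑ a, pb a * f a) - Real.log Z := by
    have : ∑ a, pb a * Real.log (ps a)
        = ∑ a, (pb a * f a - pb a * Real.log Z) := by
      refine Finset.sum_congr rfl fun a _ => ?_
      rw [hlogps a]; ring
    rw [this, Finset.sum_sub_distrib, ← Finset.sum_mul, hsum, one_mul]
  rw [hLHS, ge_iff_le, hRHS]
  linarith
end

section
/- Fix a state s. Let the action space be ℝ, let π⁺ and π⁻ be probability distributions on ℝ with finite support (or finite first moments), let ε ∈ [0,1], and define the mixture πβ = (1−ε)·π⁺ + ε·π⁻. Let w : ℝ → ℝ_{>0} be a positive weight function. Consider the weighted squared loss L(μ) = E_{a∼πβ}[w(a)·(a − μ)²/(2σ²)] for σ > 0, and let μ* = argmin L, and μ⁺ = argmin of the corresponding loss with πβ replaced by π⁺. Then |μ* − μ⁺| ≤ ε·E_{a∼π⁻}[w(a)·|a − μ⁺|] / E_{a∼πβ}[w(a)]. -/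
open MeasureTheory

-- quadratic minimizer lemma
lemma quad_min (I B A σ : ℝ) (hI : 0 < I) (hσ : 0 < σ) (L : ℝ → ℝ)
    (hL : ∀ μ, L μ = (I * μ ^ 2 - 2 * B * μ + A) / (2 * σ ^ 2)) (μ0 : ℝ)
    (hmin : IsMinOn L Set.univ μ0) : μ0 = B / I := by
  have h := hmin (Set.mem_univ (B / I))
  simp only [Set.mem_setOf_eq, hL] at h
  have h2 : (0:ℝ) < 2 * σ ^ 2 := by positivity
  rw [div_le_div_iff_of_pos_right h2] at h
  have hB : I * (B / I) = B := mul_div_cancel₀ B hI.ne'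
  have h3 : (I * μ0 - B) ^ 2 ≤ 0 := by nlinarith [mul_le_mul_of_nonneg_left h hI.le]
  have h4 : I * μ0 - B = 0 := by nlinarith [sq_nonneg (I * μ0 - B)]
  field_simp
  linarith

-- expansion of the loss
lemma loss_expand (ν : Measure ℝ) (σ : ℝ) (hσ : 0 < σ) (w : ℝ → ℝ)
    (hIntw : Integrable w ν) (hIntwa : Integrable (fun a => w a * a) ν)
    (hIntwa2 : Integrable (fun a => w a * a ^ 2) ν) (μ : ℝ) :
    ∫ a, w a * (a - μ) ^ 2 / (2 * σ ^ 2) ∂ν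
      = ((∫ a, w a ∂ν) * μ ^ 2 - 2 * (∫ a, w a * a ∂ν) * μ + ∫ a, w a * a ^ 2 ∂ν)
        / (2 * σ ^ 2) := by
  have he : (fun a => w a * (a - μ) ^ 2)
      = fun a => (w a * a ^ 2 - (2 * μ) * (w a * a)) + μ ^ 2 * w a := by
    funext a; ring
  have hint1 : Integrable (fun a => w a * a ^ 2 - 2 * μ * (w a * a)) ν := by
    exact hIntwa2.sub (hIntwa.const_mul _)
  have hint2 : Integrable (fun a => μ ^ 2 * w a) ν := hIntw.const_mul _
  rw [integral_div, he, integral_add hint1 hint2,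
    integral_sub hIntwa2 (hIntwa.const_mul _), integral_const_mul, integral_const_mul]
  ring

-- mixture integral
lemma mix_integral (pplus pminus : Measure ℝ) (ε : ℝ) (hε0 : 0 ≤ ε) (hε1 : ε ≤ 1)
    (f : ℝ → ℝ)
    (hfβ : Integrable f ((ENNReal.ofReal (1 - ε)) • pplus + (ENNReal.ofReal ε) • pminus))
    (hfp : Integrable f pplus) :
    ∫ a, f a ∂((ENNReal.ofReal (1 - ε)) • pplus + (ENNReal.ofReal ε) • pminus)
      = (1 - ε) * ∫ a, f a ∂pplus + ε * ∫ a, f a ∂pminus := by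
  rcases eq_or_lt_of_le hε0 with h0 | h0
  · subst h0; simp
  · have hne : ENNReal.ofReal ε ≠ 0 := by simpa [ENNReal.ofReal_eq_zero] using h0
    have hm : Integrable f ((ENNReal.ofReal ε) • pminus) := (integrable_add_measure.1 hfβ).2
    rw [integral_add_measure (hfp.smul_measure ENNReal.ofReal_ne_top) hm,
      integral_smul_measure, integral_smul_measure,
      ENNReal.toReal_ofReal (by linarith), ENNReal.toReal_ofReal hε0]
    rfl

theorem awr_l2_contamination_bias_bound
    (pplus pminus : Measure ℝ)
    [IsProbabilityMeasure pplus] [IsProbabilityMeasure pminus]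
    (ε : ℝ) (hε : ε ∈ Set.Icc (0:ℝ) 1)
    (pβ : Measure ℝ)
    (hpβ : pβ = (ENNReal.ofReal (1 - ε)) • pplus + (ENNReal.ofReal ε) • pminus)
    (σ : ℝ) (hσ : 0 < σ)
    (w : ℝ → ℝ) (hw : ∀ a, 0 < w a)
    (hIntw : Integrable w pβ) (hIntw' : Integrable w pplus)
    (hIntwa : Integrable (fun a => w a * a) pβ)
    (hIntwa' : Integrable (fun a => w a * a) pplus)
    (hIntwa2 : Integrable (fun a => w a * a ^ 2) pβ)
    (hIntwa2' : Integrable (fun a => w a * a ^ 2) pplus)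
    (hwb : 0 < ∫ a, w a ∂pβ) (hwp : 0 < ∫ a, w a ∂pplus)
    (L Lplus : ℝ → ℝ)
    (hL : ∀ μ, L μ = ∫ a, w a * (a - μ) ^ 2 / (2 * σ ^ 2) ∂pβ)
    (hLplus : ∀ μ, Lplus μ = ∫ a, w a * (a - μ) ^ 2 / (2 * σ ^ 2) ∂pplus)
    (μstar μplus : ℝ)
    (hμstar : IsMinOn L Set.univ μstar)
    (hμplus : IsMinOn Lplus Set.univ μplus) :
    |μstar - μplus| ≤
      ε * (∫ a, w a * |a - μplus| ∂pminus) / ∫ a, w a ∂pβ := by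
  obtain ⟨hε0, hε1⟩ := hε
  set Iβ := ∫ a, w a ∂pβ with hIβ
  set Bβ := ∫ a, w a * a ∂pβ with hBβ
  set Ip := ∫ a, w a ∂pplus with hIp
  set Bp := ∫ a, w a * a ∂pplus with hBp
  -- minimizers are weighted means
  have hμs : μstar = Bβ / Iβ := by
    refine quad_min Iβ Bβ (∫ a, w a * a ^ 2 ∂pβ) σ hwb hσ L (fun μ => ?_) μstar hμstar
    rw [hL μ, loss_expand pβ σ hσ w hIntw hIntwa hIntwa2]
  have hμp : μplus = Bp / Ip := by
    refine quad_min Ip Bp (∫ a, w a * a ^ 2 ∂pplus) σ hwp hσ Lplus (fun μ => ?_) μplus hμplus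
    rw [hLplus μ, loss_expand pplus σ hσ w hIntw' hIntwa' hIntwa2']
  -- f = w * (a - μplus)
  set f : ℝ → ℝ := fun a => w a * (a - μplus) with hf
  have hfβ : Integrable f pβ := by
    have : f = fun a => w a * a - μplus * w a := by funext a; simp [hf]; ring
    rw [this]; exact hIntwa.sub (hIntw.const_mul _)
  have hfp : Integrable f pplus := by
    have : f = fun a => w a * a - μplus * w a := by funext a; simp [hf]; ring
    rw [this]; exact hIntwa'.sub (hIntw'.const_mul _)
  have hfpzero : ∫ a, f a ∂pplus = 0 := by
    have : f = fun a => w a * a - μplus * w a := by funext a; simp [hf]; ring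
    rw [this, integral_sub hIntwa' (hIntw'.const_mul _), integral_const_mul]
    rw [hμp]; field_simp
    rw [← hBp, ← hIp]; ring
  have hmix : ∫ a, f a ∂pβ = ε * ∫ a, f a ∂pminus := by
    rw [hpβ, mix_integral pplus pminus ε hε0 hε1 f (hpβ ▸ hfβ) hfp, hfpzero]
    ring
  have hdiff : μstar - μplus = (∫ a, f a ∂pβ) / Iβ := by
    have hfint : ∫ a, f a ∂pβ = Bβ - μplus * Iβ := by
      have : f = fun a => w a * a - μplus * w a := by funext a; simp [hf]; ring
      rw [this, integral_sub hIntwa (hIntw.const_mul _), integral_const_mul]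
    rw [hfint, hμs]; field_simp
  have habs : |∫ a, f a ∂pminus| ≤ ∫ a, w a * |a - μplus| ∂pminus := by
    calc |∫ a, f a ∂pminus| ≤ ∫ a, |f a| ∂pminus := by
          simpa [Real.norm_eq_abs] using norm_integral_le_integral_norm (μ := pminus) f
      _ = _ := by
          apply integral_congr_ae; filter_upwards with a
          simp [hf, abs_mul, abs_of_pos (hw a)]
  rw [hdiff, hmix, abs_div, abs_of_pos hwb, abs_mul, abs_of_nonneg hε0]
  exact (div_le_div_iff_of_pos_right hwb).2 (mul_le_mul_of_nonneg_left habs hε0)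
end

section
/- Let F : ℝ → ℝ be convex and twice continuously differentiable, let π⁺, π⁻ be probability distributions on ℝ, ε ∈ [0,1], πβ = (1−ε)π⁺ + ε π⁻, and w : ℝ → ℝ_{>0} a weight function. Define G(μ) = E_{a∼πβ}[w(a)·F(μ − a)] and G⁺(μ) = E_{a∼π⁺}[w(a)·F(μ − a)]. Suppose μ* minimizes G and μ⁺ minimizes G⁺, with both first-order conditions G′(μ*) = 0 and (G⁺)′(μ⁺) = 0 holding, and suppose inf over ξ between μ⁺ and μ* of E_{a∼πβ}[w(a)·F″(ξ − a)] = H > 0. Then |μ* − μ⁺| ≤ ε·E_{a∼π⁻}[w(a)·sup|F′|] / H, where sup|F′| denotes the supremum of |F′(μ⁺ − a)| over a in the support of π⁻. -/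
open MeasureTheory Set Filter intervalIntegral



private lemma awr_deriv_nonneg_of_monotone {f : ℝ → ℝ} (hm : Monotone f) {x d : ℝ}
    (h : HasDerivAt f d x) : 0 ≤ d := by
  have ht := hasDerivAt_iff_tendsto_slope.mp h
  have ht' : Tendsto (slope f x) (nhdsWithin x (Set.Ioi x)) (nhds d) :=
    ht.mono_left (nhdsWithin_mono x (fun y hy => ne_of_gt hy))
  refine ge_of_tendsto ht' ?_
  filter_upwards [self_mem_nhdsWithin] with y hy
  have hxy : x < y := hy
  rw [slope_def_field]
  have := hm hxy.le
  have h2 : (0:ℝ) < y - x := by linarith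
  apply div_nonneg <;> linarith

private lemma awr_grad_ineq {f : ℝ → ℝ} (hc : ConvexOn ℝ Set.univ f)
    (hd : Differentiable ℝ f) (x y : ℝ) : f x + deriv f x * (y - x) ≤ f y := by
  rcases lt_trichotomy x y with h | h | h
  · have hs := hc.deriv_le_slope (mem_univ x) (mem_univ y) h (hd x)
    rw [slope_def_field] at hs
    have h' : (0:ℝ) < y - x := by linarith
    have := (le_div_iff₀ h').mp hs
    linarith
  · subst h; simp
  · have hs := hc.slope_le_deriv (mem_univ y) (mem_univ x) h (hd x)
    rw [slope_def_field] at hs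
    have h' : (0:ℝ) < x - y := by linarith
    have := (div_le_iff₀ h').mp hs
    nlinarith

private lemma awr_ofReal_integral_le {α : Type*} [MeasurableSpace α] (μ : Measure α)
    (f : α → ℝ) (hf : ∀ a, 0 ≤ f a) :
    ENNReal.ofReal (∫ a, f a ∂μ) ≤ ∫⁻ a, ENNReal.ofReal (f a) ∂μ := by
  by_cases hi : Integrable f μ
  · exact le_of_eq (ofReal_integral_eq_lintegral_ofReal hi (ae_of_all _ hf))
  · rw [integral_undef hi]; simp

private lemma awr_w_aemeasurable (F w : ℝ → ℝ) (ν : Measure ℝ) (hFc : Continuous F)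
    (hmeas : ∀ μ : ℝ, AEStronglyMeasurable (fun a => w a * F (μ - a)) ν)
    (R : ℝ) (hdir : (∀ x ≥ R, 1 ≤ F x) ∨ (∀ x ≤ R, 1 ≤ F x)) :
    AEMeasurable w ν := by
  have hFcomp : ∀ μ : ℝ, AEMeasurable (fun a => F (μ - a)) ν := fun μ =>
    (hFc.comp (continuous_const.sub continuous_id)).aemeasurable
  cases hdir with
  | inl h =>
    have key : ∀ n : ℕ, AEMeasurable w (ν.restrict (Set.Iic (n:ℝ))) := by
      intro n
      have h1 : AEMeasurable (fun a => (w a * F ((n + R) - a)) / F ((n + R) - a))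
          (ν.restrict (Set.Iic (n:ℝ))) :=
        ((hmeas (n + R)).aemeasurable.restrict).div ((hFcomp (n + R)).restrict)
      refine h1.congr ?_
      refine (ae_restrict_iff' measurableSet_Iic).2 (ae_of_all _ ?_)
      intro a ha
      have hF1 : 1 ≤ F ((n + R) - a) := by
        apply h; simp only [Set.mem_Iic] at ha; linarith
      field_simp
    have hU : (⋃ n : ℕ, Set.Iic (n:ℝ)) = Set.univ := by
      ext x; simp only [Set.mem_iUnion, Set.mem_Iic, Set.mem_univ, iff_true]
      exact exists_nat_ge x
    have := aemeasurable_iUnion_iff.mpr key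
    rwa [hU, Measure.restrict_univ] at this
  | inr h =>
    have key : ∀ n : ℕ, AEMeasurable w (ν.restrict (Set.Ici (-(n:ℝ)))) := by
      intro n
      have h1 : AEMeasurable (fun a => (w a * F ((R - n) - a)) / F ((R - n) - a))
          (ν.restrict (Set.Ici (-(n:ℝ)))) :=
        ((hmeas (R - n)).aemeasurable.restrict).div ((hFcomp (R - n)).restrict)
      refine h1.congr ?_
      refine (ae_restrict_iff' measurableSet_Ici).2 (ae_of_all _ ?_)
      intro a ha
      have hF1 : 1 ≤ F ((R - n) - a) := by
        apply h; simp only [Set.mem_Ici] at ha; linarith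
      field_simp
    have hU : (⋃ n : ℕ, Set.Ici (-(n:ℝ))) = Set.univ := by
      ext x; simp only [Set.mem_iUnion, Set.mem_Ici, Set.mem_univ, iff_true]
      obtain ⟨n, hn⟩ := exists_nat_ge (-x)
      exact ⟨n, by linarith⟩
    have := aemeasurable_iUnion_iff.mpr key
    rwa [hU, Measure.restrict_univ] at this


set_option maxHeartbeats 1000000 in
private lemma awr_strong_convexity
    (F : ℝ → ℝ) (hFconv : ConvexOn ℝ Set.univ F) (hFdiff : ContDiff ℝ 2 F)
    (pβ : Measure ℝ) [SFinite pβ]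
    (w : ℝ → ℝ) (hw : ∀ a, 0 < w a) (hwma : AEMeasurable w pβ)
    (hGint : ∀ μ, Integrable (fun a => w a * F (μ - a)) pβ)
    (H : ℝ) (hH : 0 ≤ H)
    (P Q : ℝ) (hPQ : P ≤ Q)
    (hK : ∀ ξ ∈ Set.Icc P Q, H ≤ ∫ a, w a * iteratedDeriv 2 F (ξ - a) ∂pβ)
    (u v : ℝ) (hu : 0 ≤ u) (hv : 0 ≤ v) (huv : u + v = 1) :
    H / 2 * (u * v * (Q - P)^2) ≤
      u * (∫ a, w a * F (P - a) ∂pβ) + v * (∫ a, w a * F (Q - a) ∂pβ)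
        - ∫ a, w a * F ((u*P + v*Q) - a) ∂pβ := by
  obtain rfl : v = 1 - u := by linarith
  have hu1 : u ≤ 1 := by linarith
  -- basic differentiability facts
  have hFd : Differentiable ℝ F := hFdiff.differentiable (by norm_num)
  have hdFcont : Continuous (deriv F) := hFdiff.continuous_deriv (by norm_num)
  have hF2cont : Continuous (iteratedDeriv 2 F) :=
    hFdiff.continuous_iteratedDeriv 2 (by norm_num)
  have hdFcd : ContDiff ℝ 1 (deriv F) := by
    have := ContDiff.iterate_deriv' 1 1 (f := F) (by exact_mod_cast hFdiff)
    simpa using this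
  have hdF : Differentiable ℝ (deriv F) := hdFcd.differentiable (by norm_num)
  have hF2eq : iteratedDeriv 2 F = deriv (deriv F) := by
    rw [iteratedDeriv_succ, iteratedDeriv_one]
  have hF2deriv : ∀ x, HasDerivAt (deriv F) (iteratedDeriv 2 F x) x := by
    intro x; rw [hF2eq]; exact (hdF x).hasDerivAt
  have hF2nonneg : ∀ x, 0 ≤ iteratedDeriv 2 F x := by
    intro x
    have hmono : Monotone (deriv F) := by
      have := hFconv.monotoneOn_deriv (fun x _ => hFd x)
      exact monotoneOn_univ.mp this
    exact awr_deriv_nonneg_of_monotone hmono (hF2deriv x)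
  have hshift : ∀ a x : ℝ, HasDerivAt (fun ξ => F (ξ - a)) (deriv F (x - a)) x := by
    intro a x
    simpa [Function.comp_def] using (hFd (x - a)).hasDerivAt.comp x ((hasDerivAt_id x).sub_const a)
  have hshift' : ∀ a x : ℝ, HasDerivAt (fun ξ => deriv F (ξ - a))
      (iteratedDeriv 2 F (x - a)) x := by
    intro a x
    simpa [Function.comp_def] using (hF2deriv (x - a)).comp x ((hasDerivAt_id x).sub_const a)
  -- degenerate cases
  rcases eq_or_lt_of_le hu with hu0 | hu0
  · rw [← hu0]; norm_num
  rcases eq_or_lt_of_le hu1 with hu1' | hu1'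
  · rw [hu1']; norm_num
  rcases eq_or_lt_of_le hPQ with hPQ' | hPQ'
  · rw [← hPQ']
    have h1 : u * P + (1 - u) * P = P := by ring
    rw [h1]
    have : (P - P)^2 = 0 := by ring
    rw [this]
    have h2 : H / 2 * (u * (1 - u) * 0) = 0 := by ring
    rw [h2]
    have h3 : u * (∫ a, w a * F (P - a) ∂pβ) + (1 - u) * (∫ a, w a * F (P - a) ∂pβ)
        - (∫ a, w a * F (P - a) ∂pβ) = 0 := by ring
    linarith
  -- main case: 0 < u < 1, P < Q
  set Z : ℝ := u * P + (1 - u) * Q with hZ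
  have hPZ : P < Z := by rw [hZ]; nlinarith
  have hZQ : Z < Q := by rw [hZ]; nlinarith
  -- the tent kernel
  set g : ℝ → ℝ := fun ξ => min (u * (ξ - P)) ((1 - u) * (Q - ξ)) with hg
  have hgcont : Continuous g := by
    apply Continuous.min
    · exact continuous_const.mul (continuous_id.sub continuous_const)
    · exact continuous_const.mul (continuous_const.sub continuous_id)
  have hgnonneg : ∀ ξ ∈ Set.Icc P Q, 0 ≤ g ξ := by
    intro ξ hξ
    rw [hg]
    simp only [le_min_iff]
    constructor
    · nlinarith [hξ.1]
    · nlinarith [hξ.2]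
  have hg_left : ∀ ξ ∈ Set.uIcc P Z, g ξ = u * (ξ - P) := by
    intro ξ hξ
    rw [Set.uIcc_of_le hPZ.le] at hξ
    rw [hg]
    apply min_eq_left
    have : (1 - u) * (Q - ξ) - u * (ξ - P) = Z - ξ := by rw [hZ]; ring
    linarith [hξ.2]
  have hg_right : ∀ ξ ∈ Set.uIcc Z Q, g ξ = (1 - u) * (Q - ξ) := by
    intro ξ hξ
    rw [Set.uIcc_of_le hZQ.le] at hξ
    rw [hg]
    apply min_eq_right
    have : (1 - u) * (Q - ξ) - u * (ξ - P) = Z - ξ := by rw [hZ]; ring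
    linarith [hξ.1]
  -- per-a identity
  have ident : ∀ a : ℝ, u * F (P - a) + (1 - u) * F (Q - a) - F (Z - a)
      = ∫ ξ in P..Q, g ξ * iteratedDeriv 2 F (ξ - a) := by
    intro a
    have hci : ∀ (b c : ℝ), IntervalIntegrable (fun ξ => g ξ * iteratedDeriv 2 F (ξ - a))
        MeasureTheory.volume b c := by
      intro b c
      exact (hgcont.mul (hF2cont.comp (continuous_id.sub continuous_const))).intervalIntegrable b c
    have hsplit : (∫ ξ in P..Q, g ξ * iteratedDeriv 2 F (ξ - a))
        = (∫ ξ in P..Z, g ξ * iteratedDeriv 2 F (ξ - a))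
          + ∫ ξ in Z..Q, g ξ * iteratedDeriv 2 F (ξ - a) :=
      (integral_add_adjacent_intervals (hci P Z) (hci Z Q)).symm
    have hL : (∫ ξ in P..Z, g ξ * iteratedDeriv 2 F (ξ - a))
        = ∫ ξ in P..Z, (u * (ξ - P)) * iteratedDeriv 2 F (ξ - a) := by
      apply integral_congr
      intro ξ hξ
      simp only [hg_left ξ hξ]
    have hR : (∫ ξ in Z..Q, g ξ * iteratedDeriv 2 F (ξ - a))
        = ∫ ξ in Z..Q, ((1 - u) * (Q - ξ)) * iteratedDeriv 2 F (ξ - a) := by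
      apply integral_congr
      intro ξ hξ
      simp only [hg_right ξ hξ]
    -- integration by parts on the left piece
    have ibp1 : (∫ ξ in P..Z, (u * (ξ - P)) * iteratedDeriv 2 F (ξ - a))
        = (u * (Z - P)) * deriv F (Z - a) - (u * (P - P)) * deriv F (P - a)
          - ∫ ξ in P..Z, u * deriv F (ξ - a) := by
      apply intervalIntegral.integral_mul_deriv_eq_deriv_mul
        (u := fun ξ => u * (ξ - P)) (u' := fun _ => u)
        (v := fun ξ => deriv F (ξ - a)) (v' := fun ξ => iteratedDeriv 2 F (ξ - a))
      · intro x _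
        have : HasDerivAt (fun ξ => u * (ξ - P)) (u * 1) x :=
          ((hasDerivAt_id x).sub_const P).const_mul u
        simpa using this
      · intro x _
        exact hshift' a x
      · exact intervalIntegrable_const
      · exact ((hF2cont.comp (continuous_id.sub continuous_const)).intervalIntegrable P Z)
    have ibp2 : (∫ ξ in Z..Q, ((1 - u) * (Q - ξ)) * iteratedDeriv 2 F (ξ - a))
        = ((1 - u) * (Q - Q)) * deriv F (Q - a) - ((1 - u) * (Q - Z)) * deriv F (Z - a)
          - ∫ ξ in Z..Q, (-(1 - u)) * deriv F (ξ - a) := by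
      apply intervalIntegral.integral_mul_deriv_eq_deriv_mul
        (u := fun ξ => (1 - u) * (Q - ξ)) (u' := fun _ => -(1 - u))
        (v := fun ξ => deriv F (ξ - a)) (v' := fun ξ => iteratedDeriv 2 F (ξ - a))
      · intro x _
        have : HasDerivAt (fun ξ => (1 - u) * (Q - ξ)) ((1 - u) * (0 - 1)) x :=
          ((hasDerivAt_const x Q).sub (hasDerivAt_id x)).const_mul (1 - u)
        simpa using this
      · intro x _
        exact hshift' a x
      · exact intervalIntegrable_const
      · exact ((hF2cont.comp (continuous_id.sub continuous_const)).intervalIntegrable Z Q)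
    have ftc1 : (∫ ξ in P..Z, deriv F (ξ - a)) = F (Z - a) - F (P - a) :=
      integral_eq_sub_of_hasDerivAt (fun x _ => hshift a x)
        ((hdFcont.comp (continuous_id.sub continuous_const)).intervalIntegrable P Z)
    have ftc2 : (∫ ξ in Z..Q, deriv F (ξ - a)) = F (Q - a) - F (Z - a) :=
      integral_eq_sub_of_hasDerivAt (fun x _ => hshift a x)
        ((hdFcont.comp (continuous_id.sub continuous_const)).intervalIntegrable Z Q)
    have hc1 : (∫ ξ in P..Z, u * deriv F (ξ - a)) = u * (F (Z - a) - F (P - a)) := by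
      rw [intervalIntegral.integral_const_mul, ftc1]
    have hc2 : (∫ ξ in Z..Q, (-(1 - u)) * deriv F (ξ - a))
        = (-(1 - u)) * (F (Q - a) - F (Z - a)) := by
      rw [intervalIntegral.integral_const_mul, ftc2]
    rw [hsplit, hL, hR, ibp1, ibp2, hc1, hc2]
    have hZP : Z - P = (1 - u) * (Q - P) := by rw [hZ]; ring
    have hQZ : Q - Z = u * (Q - P) := by rw [hZ]; ring
    rw [hZP, hQZ]
    ring
  -- nonnegativity of the pointwise gap
  have hΔ : ∀ a : ℝ, 0 ≤ u * F (P - a) + (1 - u) * F (Q - a) - F (Z - a) := by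
    intro a
    have hcv := hFconv.2 (Set.mem_univ (P - a)) (Set.mem_univ (Q - a)) hu hv huv
    simp only [smul_eq_mul] at hcv
    have he : u * (P - a) + (1 - u) * (Q - a) = Z - a := by rw [hZ]; ring
    rw [he] at hcv
    linarith
  set D : ℝ → ℝ := fun a => w a * (u * F (P - a) + (1 - u) * F (Q - a) - F (Z - a)) with hD
  have hDnonneg : ∀ a, 0 ≤ D a := fun a => mul_nonneg (hw a).le (hΔ a)
  have hDint : Integrable D pβ := by
    have h1 := (((hGint P).const_mul u).add ((hGint Q).const_mul (1 - u))).sub (hGint Z)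
    exact h1.congr (ae_of_all _ (fun a => by
      simp only [Pi.add_apply, Pi.sub_apply, hD]; ring))
  have hIeq : ∫ a, D a ∂pβ
      = u * (∫ a, w a * F (P - a) ∂pβ) + (1 - u) * (∫ a, w a * F (Q - a) ∂pβ)
        - ∫ a, w a * F (Z - a) ∂pβ := by
    have hPint : Integrable (fun a => u * (w a * F (P - a))) pβ := (hGint P).const_mul u
    have hQint : Integrable (fun a => (1 - u) * (w a * F (Q - a))) pβ :=
      (hGint Q).const_mul (1 - u)
    have hPQint : Integrable
        (fun a => u * (w a * F (P - a)) + (1 - u) * (w a * F (Q - a))) pβ := hPint.add hQint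
    have e0 : D = fun a => (u * (w a * F (P - a)) + (1 - u) * (w a * F (Q - a)))
        - w a * F (Z - a) := funext fun a => by simp only [hD]; ring
    rw [e0, integral_sub hPQint (hGint Z), integral_add hPint hQint,
      MeasureTheory.integral_const_mul, MeasureTheory.integral_const_mul]
  have hlint : ∫ a, D a ∂pβ = (∫⁻ a, ENNReal.ofReal (D a) ∂pβ).toReal :=
    integral_eq_lintegral_of_nonneg_ae (ae_of_all _ hDnonneg) hDint.1
  have hiden2 : ∀ a : ℝ, ENNReal.ofReal (D a)
      = ∫⁻ ξ in Set.Ioc P Q, ENNReal.ofReal (w a * (g ξ * iteratedDeriv 2 F (ξ - a))) := by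
    intro a
    have h1 : D a = ∫ ξ in Set.Ioc P Q, w a * (g ξ * iteratedDeriv 2 F (ξ - a)) := by
      have h2 : D a = w a * ∫ ξ in P..Q, g ξ * iteratedDeriv 2 F (ξ - a) := by
        simp only [hD]; rw [← ident a]
      rw [h2, ← intervalIntegral.integral_const_mul,
        intervalIntegral.integral_of_le hPQ]
    rw [h1]
    refine ofReal_integral_eq_lintegral_ofReal ?_ ?_
    · exact (continuous_const.mul (hgcont.mul
        (hF2cont.comp (continuous_id.sub continuous_const)))).integrableOn_Ioc
    · refine (ae_restrict_iff' measurableSet_Ioc).2 (ae_of_all _ ?_)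
      intro ξ hξ
      exact mul_nonneg (hw a).le (mul_nonneg (hgnonneg ξ (Set.Ioc_subset_Icc_self hξ))
        (hF2nonneg _))
  have hjoint : AEMeasurable (fun p : ℝ × ℝ =>
      ENNReal.ofReal (w p.1 * (g p.2 * iteratedDeriv 2 F (p.2 - p.1))))
      (pβ.prod (MeasureTheory.volume.restrict (Set.Ioc P Q))) := by
    apply ENNReal.measurable_ofReal.comp_aemeasurable
    exact hwma.comp_fst.mul ((hgcont.comp continuous_snd).mul
      (hF2cont.comp (continuous_snd.sub continuous_fst))).aemeasurable
  have hswap : (∫⁻ a, (∫⁻ ξ in Set.Ioc P Q,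
        ENNReal.ofReal (w a * (g ξ * iteratedDeriv 2 F (ξ - a)))) ∂pβ)
      = ∫⁻ ξ in Set.Ioc P Q, ∫⁻ a,
        ENNReal.ofReal (w a * (g ξ * iteratedDeriv 2 F (ξ - a))) ∂pβ :=
    lintegral_lintegral_swap
      (f := fun a ξ => ENNReal.ofReal (w a * (g ξ * iteratedDeriv 2 F (ξ - a)))) hjoint
  have hinner : ∀ ξ ∈ Set.Ioc P Q, ENNReal.ofReal (g ξ) * ENNReal.ofReal H
      ≤ ∫⁻ a, ENNReal.ofReal (w a * (g ξ * iteratedDeriv 2 F (ξ - a))) ∂pβ := by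
    intro ξ hξ
    have hgnn := hgnonneg ξ (Set.Ioc_subset_Icc_self hξ)
    have heq : ∀ a, ENNReal.ofReal (w a * (g ξ * iteratedDeriv 2 F (ξ - a)))
        = ENNReal.ofReal (g ξ) * ENNReal.ofReal (w a * iteratedDeriv 2 F (ξ - a)) := by
      intro a
      rw [← ENNReal.ofReal_mul hgnn]
      congr 1; ring
    rw [lintegral_congr heq, lintegral_const_mul' _ _ ENNReal.ofReal_ne_top]
    refine mul_le_mul_right ?_ _
    calc ENNReal.ofReal H
        ≤ ENNReal.ofReal (∫ a, w a * iteratedDeriv 2 F (ξ - a) ∂pβ) :=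
          ENNReal.ofReal_le_ofReal (hK ξ (Set.Ioc_subset_Icc_self hξ))
      _ ≤ ∫⁻ a, ENNReal.ofReal (w a * iteratedDeriv 2 F (ξ - a)) ∂pβ :=
          awr_ofReal_integral_le _ _ (fun a => mul_nonneg (hw a).le (hF2nonneg _))
  have houter : (∫⁻ ξ in Set.Ioc P Q, ENNReal.ofReal (g ξ)) * ENNReal.ofReal H
      ≤ ∫⁻ ξ in Set.Ioc P Q, ∫⁻ a,
        ENNReal.ofReal (w a * (g ξ * iteratedDeriv 2 F (ξ - a))) ∂pβ := by
    rw [← lintegral_mul_const' _ _ ENNReal.ofReal_ne_top]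
    apply lintegral_mono_ae
    refine (ae_restrict_iff' measurableSet_Ioc).2 (ae_of_all _ ?_)
    intro ξ hξ
    exact hinner ξ hξ
  have htent_real : (∫ ξ in Set.Ioc P Q, g ξ) = u * (1 - u) * (Q - P)^2 / 2 := by
    rw [← intervalIntegral.integral_of_le hPQ,
      ← intervalIntegral.integral_add_adjacent_intervals
        (hgcont.intervalIntegrable P Z) (hgcont.intervalIntegrable Z Q)]
    have hLg : (∫ ξ in P..Z, g ξ) = ∫ ξ in P..Z, u * (ξ - P) := by
      apply intervalIntegral.integral_congr
      intro ξ hξ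
      simp only [hg_left ξ hξ]
    have hRg : (∫ ξ in Z..Q, g ξ) = ∫ ξ in Z..Q, (1 - u) * (Q - ξ) := by
      apply intervalIntegral.integral_congr
      intro ξ hξ
      simp only [hg_right ξ hξ]
    rw [hLg, hRg, intervalIntegral.integral_const_mul, intervalIntegral.integral_const_mul]
    have e1 : (∫ ξ in P..Z, (ξ - P)) = ((Z - P)^2 - (P - P)^2) / 2 := by
      rw [intervalIntegral.integral_comp_sub_right (fun x => x) P, integral_id]
    have e2 : (∫ ξ in Z..Q, (Q - ξ)) = ((Q - Z)^2 - (Q - Q)^2) / 2 := by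
      rw [intervalIntegral.integral_comp_sub_left (fun x => x) Q, integral_id]
    rw [e1, e2, hZ]
    ring
  have htent : (∫⁻ ξ in Set.Ioc P Q, ENNReal.ofReal (g ξ))
      = ENNReal.ofReal (u * (1 - u) * (Q - P)^2 / 2) := by
    rw [← htent_real]
    refine (ofReal_integral_eq_lintegral_ofReal ?_ ?_).symm
    · exact hgcont.integrableOn_Ioc
    · refine (ae_restrict_iff' measurableSet_Ioc).2 (ae_of_all _ ?_)
      intro ξ hξ
      exact hgnonneg ξ (Set.Ioc_subset_Icc_self hξ)
  have hbig : ENNReal.ofReal (u * (1 - u) * (Q - P)^2 / 2) * ENNReal.ofReal H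
      ≤ ∫⁻ a, ENNReal.ofReal (D a) ∂pβ := by
    calc ENNReal.ofReal (u * (1 - u) * (Q - P)^2 / 2) * ENNReal.ofReal H
        = (∫⁻ ξ in Set.Ioc P Q, ENNReal.ofReal (g ξ)) * ENNReal.ofReal H := by rw [htent]
      _ ≤ ∫⁻ ξ in Set.Ioc P Q, ∫⁻ a,
            ENNReal.ofReal (w a * (g ξ * iteratedDeriv 2 F (ξ - a))) ∂pβ := houter
      _ = ∫⁻ a, (∫⁻ ξ in Set.Ioc P Q,
            ENNReal.ofReal (w a * (g ξ * iteratedDeriv 2 F (ξ - a)))) ∂pβ := hswap.symm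
      _ = ∫⁻ a, ENNReal.ofReal (D a) ∂pβ := (lintegral_congr hiden2).symm
  have hfin : H * (u * (1 - u) * (Q - P)^2 / 2) ≤ ∫ a, D a ∂pβ := by
    rw [hlint]
    have hc : (0:ℝ) ≤ u * (1 - u) * (Q - P)^2 / 2 :=
      div_nonneg (mul_nonneg (mul_nonneg hu hv) (sq_nonneg _)) (by norm_num)
    have h1 : ENNReal.ofReal (H * (u * (1 - u) * (Q - P)^2 / 2))
        ≤ ∫⁻ a, ENNReal.ofReal (D a) ∂pβ := by
      rw [ENNReal.ofReal_mul hH, mul_comm]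
      exact hbig
    have h2 := ENNReal.toReal_mono hDint.lintegral_lt_top.ne h1
    rwa [ENNReal.toReal_ofReal (mul_nonneg hH hc)] at h2
  rw [hIeq] at hfin
  linarith


theorem awr_general_robustness_bound
    (F : ℝ → ℝ) (hFconv : ConvexOn ℝ Set.univ F)
    (hFdiff : ContDiff ℝ 2 F)
    (pplus pminus : Measure ℝ)
    [IsProbabilityMeasure pplus] [IsProbabilityMeasure pminus]
    (ε : ℝ) (hε : ε ∈ Set.Icc (0:ℝ) 1)
    (pβ : Measure ℝ)
    (hpβ : pβ = (ENNReal.ofReal (1 - ε)) • pplus + (ENNReal.ofReal ε) • pminus)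
    (w : ℝ → ℝ) (hw : ∀ a, 0 < w a)
    (G Gplus : ℝ → ℝ)
    (hG : ∀ μ, G μ = ∫ a, w a * F (μ - a) ∂pβ)
    (hGplus : ∀ μ, Gplus μ = ∫ a, w a * F (μ - a) ∂pplus)
    (hGint : ∀ μ, Integrable (fun a => w a * F (μ - a)) pβ)
    (hGplusint : ∀ μ, Integrable (fun a => w a * F (μ - a)) pplus)
    (μstar μplus : ℝ)
    (hμstar : IsMinOn G Set.univ μstar) (hμstarFO : HasDerivAt G 0 μstar)
    (hμplus : IsMinOn Gplus Set.univ μplus) (hμplusFO : HasDerivAt Gplus 0 μplus)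
    (H : ℝ) (hH : 0 < H)
    (hHinf : ∀ ξ ∈ Set.uIcc μplus μstar,
      H ≤ ∫ a, w a * iteratedDeriv 2 F (ξ - a) ∂pβ)
    (S : Set ℝ) (hS : pminus Sᶜ = 0)
    (M : ℝ) (hM : M = sSup ((fun a => |deriv F (μplus - a)|) '' S))
    (hMbdd : BddAbove ((fun a => |deriv F (μplus - a)|) '' S))
    (hIntM : Integrable (fun a => w a * M) pminus) :
    |μstar - μplus| ≤ ε * (∫ a, w a * M ∂pminus) / H := by
  obtain ⟨hε0, hε1⟩ := hε
  have hFd : Differentiable ℝ F := hFdiff.differentiable (by norm_num)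
  have hgrad : ∀ x y : ℝ, F x + deriv F x * (y - x) ≤ F y := fun x y => by
    rcases lt_trichotomy x y with h | h | h
    · have hs := hFconv.deriv_le_slope (Set.mem_univ x) (Set.mem_univ y) h (hFd x)
      rw [slope_def_field] at hs
      have h' : (0:ℝ) < y - x := by linarith
      have := (le_div_iff₀ h').mp hs
      linarith
    · subst h; simp
    · have hs := hFconv.slope_le_deriv (Set.mem_univ y) (Set.mem_univ x) h (hFd x)
      rw [slope_def_field] at hs
      have h' : (0:ℝ) < x - y := by linarith
      have := (div_le_iff₀ h').mp hs
      nlinarith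
  -- nonnegativity of M and the integral
  have hSne : S.Nonempty := by
    rcases Set.eq_empty_or_nonempty S with h | h
    · exfalso
      rw [h, Set.compl_empty] at hS
      simp [measure_univ] at hS
    · exact h
  have hMbd : ∀ a ∈ S, |deriv F (μplus - a)| ≤ M := fun a ha =>
    hM ▸ le_csSup hMbdd ⟨a, ha, rfl⟩
  have hM0 : 0 ≤ M := by
    obtain ⟨a₀, ha₀⟩ := hSne
    exact le_trans (abs_nonneg _) (hMbd a₀ ha₀)
  have hc0 : 0 ≤ ∫ a, w a * M ∂pminus :=
    integral_nonneg fun a => mul_nonneg (hw a).le hM0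
  by_cases hdd : μstar = μplus
  · rw [hdd, sub_self, abs_zero]
    exact div_nonneg (mul_nonneg hε0 hc0) hH.le
  have hdne : μstar - μplus ≠ 0 := sub_ne_zero_of_ne hdd
  -- measurability of w
  have hx₁ : ∃ x, deriv F x ≠ 0 := by
    by_contra h
    push_neg at h
    have hF20 : iteratedDeriv 2 F = fun _ => (0:ℝ) := by
      rw [iteratedDeriv_succ, iteratedDeriv_one]
      have hd0 : deriv F = fun _ => (0:ℝ) := funext h
      rw [hd0]
      funext x
      exact deriv_const x 0
    have h0 := hHinf μplus Set.left_mem_uIcc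
    rw [hF20] at h0
    simp at h0
    linarith
  obtain ⟨x₁, hx₁⟩ := hx₁
  have hdir : ∃ R : ℝ, (∀ x ≥ R, 1 ≤ F x) ∨ (∀ x ≤ R, 1 ≤ F x) := by
    rcases hx₁.lt_or_gt with hc | hc
    · refine ⟨x₁ - (1 + |F x₁|) / (-(deriv F x₁)), Or.inr ?_⟩
      intro x hx
      have h1 := hgrad x₁ x
      have hcpos : (0:ℝ) < -(deriv F x₁) := by linarith
      have h2 : (1 + |F x₁|) / (-(deriv F x₁)) ≤ x₁ - x := by linarith
      have h3 := mul_le_mul_of_nonneg_left h2 hcpos.le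
      have h4 : (-(deriv F x₁)) * ((1 + |F x₁|) / (-(deriv F x₁))) = 1 + |F x₁| := by
        field_simp
      have h5 : deriv F x₁ * (x - x₁) = (-(deriv F x₁)) * (x₁ - x) := by ring
      have h6 := neg_abs_le (F x₁)
      nlinarith
    · refine ⟨x₁ + (1 + |F x₁|) / (deriv F x₁), Or.inl ?_⟩
      intro x hx
      have h1 := hgrad x₁ x
      have h2 : (1 + |F x₁|) / (deriv F x₁) ≤ x - x₁ := by linarith
      have h3 := mul_le_mul_of_nonneg_left h2 hc.le
      have h4 : (deriv F x₁) * ((1 + |F x₁|) / (deriv F x₁)) = 1 + |F x₁| := by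
        field_simp
      have h6 := neg_abs_le (F x₁)
      nlinarith
  obtain ⟨R, hdirR⟩ := hdir
  have hwma : AEMeasurable w pβ :=
    awr_w_aemeasurable F w pβ hFdiff.continuous (fun μ => (hGint μ).1) R hdirR
  haveI hsf : SFinite pβ := by rw [hpβ]; infer_instance
  -- splitting the integral
  have hsplit : ∀ f : ℝ → ℝ, Integrable f pβ →
      ∫ a, f a ∂pβ = (1 - ε) * ∫ a, f a ∂pplus + ε * ∫ a, f a ∂pminus := by
    intro f hf
    rw [hpβ] at hf
    obtain ⟨hf1, hf2⟩ := integrable_add_measure.mp hf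
    rw [hpβ, integral_add_measure hf1 hf2, MeasureTheory.integral_smul_measure, MeasureTheory.integral_smul_measure,
      ENNReal.toReal_ofReal (by linarith : (0:ℝ) ≤ 1 - ε), ENNReal.toReal_ofReal hε0,
      smul_eq_mul, smul_eq_mul]
  have hGdecomp : ∀ μ, G μ = (1 - ε) * Gplus μ + ε * ∫ a, w a * F (μ - a) ∂pminus := by
    intro μ
    rw [hG, hsplit _ (hGint μ), ← hGplus]
  have hGm_int : 0 < ε → ∀ μ, Integrable (fun a => w a * F (μ - a)) pminus := by
    intro hεp μ
    have h2 := (integrable_add_measure.mp (hpβ ▸ hGint μ)).2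
    rw [integrable_smul_measure (by simp only [ne_eq, ENNReal.ofReal_eq_zero, not_le]; linarith)
      ENNReal.ofReal_ne_top] at h2
    exact h2
  -- the π⁻ perturbation bound
  have hGmstep : ∀ W : ℝ, 0 < ε →
      -(|W - μplus| * ∫ a, w a * M ∂pminus)
        ≤ (∫ a, w a * F (W - a) ∂pminus) - ∫ a, w a * F (μplus - a) ∂pminus := by
    intro W hεp
    have hae : ∀ᵐ a ∂pminus,
        -(|W - μplus| * (w a * M)) ≤ w a * F (W - a) - w a * F (μplus - a) := by
      rw [ae_iff]
      refine measure_mono_null ?_ hS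
      intro a ha
      simp only [Set.mem_setOf_eq, not_le] at ha
      intro haS
      have h1 := hgrad (μplus - a) (W - a)
      have h2 : (W - a) - (μplus - a) = W - μplus := by ring
      rw [h2] at h1
      have h5 : |deriv F (μplus - a) * (W - μplus)| ≤ M * |W - μplus| := by
        rw [abs_mul]
        exact mul_le_mul_of_nonneg_right (hMbd a haS) (abs_nonneg _)
      have h4 := neg_abs_le (deriv F (μplus - a) * (W - μplus))
      have h3 : -(M * |W - μplus|) ≤ deriv F (μplus - a) * (W - μplus) := by linarith
      have h7 := mul_le_mul_of_nonneg_left h3 (hw a).le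
      have h8 := mul_le_mul_of_nonneg_left h1 (hw a).le
      nlinarith [hw a]
    have hli : Integrable (fun a => -(|W - μplus| * (w a * M))) pminus :=
      (hIntM.const_mul _).neg
    have hri : Integrable (fun a => w a * F (W - a) - w a * F (μplus - a)) pminus :=
      (hGm_int hεp W).sub (hGm_int hεp μplus)
    have hmono := integral_mono_ae hli hri hae
    rw [MeasureTheory.integral_neg, MeasureTheory.integral_const_mul,
      integral_sub (hGm_int hεp W) (hGm_int hεp μplus)] at hmono
    exact hmono
  -- subset fact for applying strong convexity
  have hKsub : ∀ P Q : ℝ, P ∈ Set.uIcc μplus μstar → Q ∈ Set.uIcc μplus μstar →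
      ∀ ξ ∈ Set.Icc P Q, H ≤ ∫ a, w a * iteratedDeriv 2 F (ξ - a) ∂pβ := by
    intro P Q hP hQ ξ hξ
    rw [Set.uIcc] at hP hQ
    refine hHinf ξ ?_
    rw [Set.uIcc]
    exact ⟨le_trans hP.1 hξ.1, le_trans hξ.2 hQ.2⟩
  -- main estimate for each t ∈ (0,1)
  have claim : ∀ t : ℝ, 0 < t → t < 1 →
      H * ((1 - t) * (μstar - μplus)^2)
        ≤ ε * ((∫ a, w a * M ∂pminus) * |μstar - μplus|) := by
    intro t ht0 ht1
    -- bound at the intermediate point near μplus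
    have hWb : -(ε * ((t * |μstar - μplus|) * ∫ a, w a * M ∂pminus))
        ≤ G (μplus + t * (μstar - μplus)) - G μplus := by
      have hGW := hGdecomp (μplus + t * (μstar - μplus))
      have hGA := hGdecomp μplus
      have h2 : Gplus μplus ≤ Gplus (μplus + t * (μstar - μplus)) :=
        isMinOn_iff.mp hμplus _ (Set.mem_univ _)
      have h3 : ε * (-( (t * |μstar - μplus|) * ∫ a, w a * M ∂pminus))
          ≤ ε * ((∫ a, w a * F ((μplus + t * (μstar - μplus)) - a) ∂pminus)
            - ∫ a, w a * F (μplus - a) ∂pminus) := by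
        rcases eq_or_lt_of_le hε0 with hε0' | hε0'
        · rw [← hε0']; simp
        · apply mul_le_mul_of_nonneg_left _ hε0
          have habs : |(μplus + t * (μstar - μplus)) - μplus| = t * |μstar - μplus| := by
            have : (μplus + t * (μstar - μplus)) - μplus = t * (μstar - μplus) := by ring
            rw [this, abs_mul, abs_of_pos ht0]
          have := hGmstep (μplus + t * (μstar - μplus)) hε0'
          rw [habs] at this
          exact this
      have h4 : 0 ≤ (1 - ε) * (Gplus (μplus + t * (μstar - μplus)) - Gplus μplus) :=
        mul_nonneg (by linarith) (by linarith)
      nlinarith [h3, h4]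
    rcases le_or_gt μplus μstar with hord | hord
    · have hA := awr_strong_convexity F hFconv hFdiff pβ w hw hwma hGint H hH.le
        μplus μstar hord (hKsub μplus μstar Set.left_mem_uIcc Set.right_mem_uIcc)
        t (1 - t) ht0.le (by linarith) (by ring)
      have hB := awr_strong_convexity F hFconv hFdiff pβ w hw hwma hGint H hH.le
        μplus μstar hord (hKsub μplus μstar Set.left_mem_uIcc Set.right_mem_uIcc)
        (1 - t) t (by linarith) ht0.le (by ring)
      rw [← hG, ← hG, ← hG] at hA hB
      have hmin1 : G μstar ≤ G (t * μplus + (1 - t) * μstar) :=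
        isMinOn_iff.mp hμstar _ (Set.mem_univ _)
      have hWeq : (1 - t) * μplus + t * μstar = μplus + t * (μstar - μplus) := by ring
      rw [hWeq] at hB
      have hsum : t * (H * ((1 - t) * (μstar - μplus)^2))
          ≤ t * (ε * ((∫ a, w a * M ∂pminus) * |μstar - μplus|)) := by
        nlinarith [hA, hB, hmin1, hWb]
      exact le_of_mul_le_mul_left hsum ht0
    · have hA := awr_strong_convexity F hFconv hFdiff pβ w hw hwma hGint H hH.le
        μstar μplus hord.le (hKsub μstar μplus Set.right_mem_uIcc Set.left_mem_uIcc)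
        (1 - t) t (by linarith) ht0.le (by ring)
      have hB := awr_strong_convexity F hFconv hFdiff pβ w hw hwma hGint H hH.le
        μstar μplus hord.le (hKsub μstar μplus Set.right_mem_uIcc Set.left_mem_uIcc)
        t (1 - t) ht0.le (by linarith) (by ring)
      rw [← hG, ← hG, ← hG] at hA hB
      have hmin1 : G μstar ≤ G ((1 - t) * μstar + t * μplus) :=
        isMinOn_iff.mp hμstar _ (Set.mem_univ _)
      have hWeq : t * μstar + (1 - t) * μplus = μplus + t * (μstar - μplus) := by ring
      rw [hWeq] at hB
      have hsum : t * (H * ((1 - t) * (μstar - μplus)^2))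
          ≤ t * (ε * ((∫ a, w a * M ∂pminus) * |μstar - μplus|)) := by
        nlinarith [hA, hB, hmin1, hWb]
      exact le_of_mul_le_mul_left hsum ht0
  -- pass to the limit t → 0
  have hlim : H * (μstar - μplus)^2
      ≤ ε * ((∫ a, w a * M ∂pminus) * |μstar - μplus|) := by
    have hseq : ∀ n : ℕ, H * ((1 - 1/((n:ℝ)+2)) * (μstar - μplus)^2)
        ≤ ε * ((∫ a, w a * M ∂pminus) * |μstar - μplus|) := by
      intro n
      apply claim
      · positivity
      · rw [div_lt_one (by positivity)]
        have : (0:ℝ) ≤ (n:ℝ) := Nat.cast_nonneg n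
        linarith
    have htend : Filter.Tendsto
        (fun n : ℕ => H * ((1 - 1/((n:ℝ)+2)) * (μstar - μplus)^2)) Filter.atTop
        (nhds (H * ((1 - 0) * (μstar - μplus)^2))) := by
      apply Filter.Tendsto.const_mul
      apply Filter.Tendsto.mul_const
      apply Filter.Tendsto.const_sub
      have h1 : Filter.Tendsto (fun n : ℕ => ((n:ℝ)+2)) Filter.atTop Filter.atTop :=
        Filter.tendsto_atTop_add_const_right _ _ tendsto_natCast_atTop_atTop
      simpa [one_div, Pi.inv_def] using h1.inv_tendsto_atTop
    have := le_of_tendsto' htend hseq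
    simpa using this
  have habs : (0:ℝ) < |μstar - μplus| := abs_pos.mpr hdne
  have hsq : (μstar - μplus)^2 = |μstar - μplus| * |μstar - μplus| := by
    rw [sq]; exact (abs_mul_abs_self _).symm
  rw [le_div_iff₀ hH]
  rw [hsq] at hlim
  have h3 : (H * |μstar - μplus|) * |μstar - μplus|
      ≤ (ε * ∫ a, w a * M ∂pminus) * |μstar - μplus| := by nlinarith [hlim]
  have h4 := le_of_mul_le_mul_right h3 habs
  linarith
end

section
/- Let c₁, c₂, c₃ > 0 and define the Flat loss f(x) = −log(c₂·exp(−c₁x²) + c₃) + c₄ for any constant c₄. Then f is differentiable everywhere, f′(x) = 2c₁c₂·x·exp(−c₁x²)/(c₂·exp(−c₁x²) + c₃), and f′(x) → 0 as |x| → ∞. Moreover |f′(x)| ≤ 2c₁c₂|x|·exp(−c₁x²)/c₃ for all x, so sup_x |f′(x)| is finite. -/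
open Filter

theorem flat_loss_properties
    (c₁ c₂ c₃ c₄ : ℝ) (h1 : 0 < c₁) (h2 : 0 < c₂) (h3 : 0 < c₃)
    (f : ℝ → ℝ)
    (hf : ∀ x, f x = -Real.log (c₂ * Real.exp (-c₁ * x ^ 2) + c₃) + c₄) :
    Differentiable ℝ f ∧
    (∀ x, deriv f x =
      2 * c₁ * c₂ * x * Real.exp (-c₁ * x ^ 2) /
        (c₂ * Real.exp (-c₁ * x ^ 2) + c₃)) ∧
    Tendsto (deriv f) atTop (nhds 0) ∧ Tendsto (deriv f) atBot (nhds 0) ∧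
    (∀ x, |deriv f x| ≤ 2 * c₁ * c₂ * |x| * Real.exp (-c₁ * x ^ 2) / c₃) ∧
    BddAbove (Set.range fun x => |deriv f x|) := by
  have hfe : f = fun x => -Real.log (c₂ * Real.exp (-c₁ * x ^ 2) + c₃) + c₄ :=
    funext hf
  subst hfe
  have hg : ∀ x : ℝ, 0 < c₂ * Real.exp (-c₁ * x ^ 2) + c₃ := fun x => by positivity
  have hD : ∀ x : ℝ, HasDerivAt
      (fun x => -Real.log (c₂ * Real.exp (-c₁ * x ^ 2) + c₃) + c₄)
      (2 * c₁ * c₂ * x * Real.exp (-c₁ * x ^ 2) /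
        (c₂ * Real.exp (-c₁ * x ^ 2) + c₃)) x := by
    intro x
    have h1' : HasDerivAt (fun x : ℝ => -c₁ * x ^ 2) (-c₁ * (2 * x)) x := by
      simpa using (hasDerivAt_pow 2 x).const_mul (-c₁)
    have h2' : HasDerivAt (fun x : ℝ => c₂ * Real.exp (-c₁ * x ^ 2) + c₃)
        (c₂ * (Real.exp (-c₁ * x ^ 2) * (-c₁ * (2 * x)))) x :=
      ((h1'.exp).const_mul c₂).add_const c₃
    have h3' := (h2'.log (hg x).ne').neg.add_const c₄
    convert h3' using 1
    rfl
    rfl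
    rfl
    ring
  have hderiv : ∀ x : ℝ, deriv (fun x => -Real.log (c₂ * Real.exp (-c₁ * x ^ 2) + c₃) + c₄) x
      = 2 * c₁ * c₂ * x * Real.exp (-c₁ * x ^ 2) /
        (c₂ * Real.exp (-c₁ * x ^ 2) + c₃) := fun x => (hD x).deriv
  have hbound : ∀ x : ℝ,
      |deriv (fun x => -Real.log (c₂ * Real.exp (-c₁ * x ^ 2) + c₃) + c₄) x|
      ≤ 2 * c₁ * c₂ * |x| * Real.exp (-c₁ * x ^ 2) / c₃ := by
    intro x
    rw [hderiv x, abs_div, abs_of_pos (hg x)]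
    have hnum : |2 * c₁ * c₂ * x * Real.exp (-c₁ * x ^ 2)|
        = 2 * c₁ * c₂ * |x| * Real.exp (-c₁ * x ^ 2) := by
      simp [abs_mul, abs_of_pos h1, abs_of_pos h2, abs_of_pos (Real.exp_pos _)]
    rw [hnum]
    apply div_le_div_of_nonneg_left _ h3 _
    · positivity
    · linarith [mul_pos h2 (Real.exp_pos (-c₁ * x ^ 2))]
  have hT : Tendsto (deriv (fun x => -Real.log (c₂ * Real.exp (-c₁ * x ^ 2) + c₃) + c₄))
      (cocompact ℝ) (nhds 0) := by
    have h := (tendsto_rpow_abs_mul_exp_neg_mul_sq_cocompact h1 1).const_mul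
      (2 * c₁ * c₂ / c₃)
    rw [mul_zero] at h
    apply squeeze_zero_norm _ h
    intro x
    rw [Real.norm_eq_abs]
    calc _ ≤ 2 * c₁ * c₂ * |x| * Real.exp (-c₁ * x ^ 2) / c₃ := hbound x
      _ = 2 * c₁ * c₂ / c₃ * (|x| ^ (1:ℝ) * Real.exp (-c₁ * x ^ 2)) := by
          rw [Real.rpow_one]; ring
  have hM : ∀ x : ℝ, |x| * Real.exp (-c₁ * x ^ 2) ≤ max 1 (1 / c₁) := by
    intro x
    rcases le_or_gt |x| 1 with h | h
    · refine le_trans ?_ (le_max_left _ _)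
      calc |x| * Real.exp (-c₁ * x ^ 2) ≤ 1 * 1 := by
            apply mul_le_mul h _ (Real.exp_nonneg _) zero_le_one
            rw [Real.exp_le_one_iff]
            nlinarith [sq_nonneg x]
        _ = 1 := one_mul 1
    · refine le_trans ?_ (le_max_right _ _)
      have hx : 0 < |x| := by linarith
      have hk : c₁ * |x| ≤ Real.exp (c₁ * x ^ 2) := by
        have h5 := Real.add_one_le_exp (c₁ * x ^ 2)
        nlinarith [sq_abs x, mul_nonneg (abs_nonneg x) (sub_nonneg.mpr h.le), mul_pos h1 hx]
      have he : Real.exp (-c₁ * x ^ 2) ≤ 1 / (c₁ * |x|) := by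
        have : -c₁ * x ^ 2 = -(c₁ * x ^ 2) := by ring
        rw [this, Real.exp_neg]
        rw [inv_eq_one_div]
        exact one_div_le_one_div_of_le (by positivity) hk
      calc |x| * Real.exp (-c₁ * x ^ 2) ≤ |x| * (1 / (c₁ * |x|)) :=
            mul_le_mul_of_nonneg_left he (abs_nonneg x)
        _ = 1 / c₁ := by field_simp [mul_comm]
  refine ⟨fun x => (hD x).differentiableAt, hderiv,
    hT.mono_left atTop_le_cocompact, hT.mono_left atBot_le_cocompact,
    hbound, ?_⟩
  refine ⟨2 * c₁ * c₂ / c₃ * max 1 (1 / c₁), ?_⟩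
  rintro y ⟨x, rfl⟩
  calc |deriv (fun x => -Real.log (c₂ * Real.exp (-c₁ * x ^ 2) + c₃) + c₄) x|
      ≤ 2 * c₁ * c₂ * |x| * Real.exp (-c₁ * x ^ 2) / c₃ := hbound x
    _ = 2 * c₁ * c₂ / c₃ * (|x| * Real.exp (-c₁ * x ^ 2)) := by ring
    _ ≤ 2 * c₁ * c₂ / c₃ * max 1 (1 / c₁) := by
        apply mul_le_mul_of_nonneg_left (hM x) (by positivity)
end

section
/- Let c₁, c₂, c₃ > 0 and define the Skew loss f(x) = −log(c₂·(exp(−c₁x²) + 1/(c₃|x| + 1))) + c₄. Then f(x) → +∞ as |x| → ∞, and f(x) ≤ −log c₂ + c₄ + log(c₃|x| + 1) for all x; in particular f grows at most logarithmically in |x|. -/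
open Filter

theorem skew_loss_properties
    (c₁ c₂ c₃ c₄ : ℝ) (h1 : 0 < c₁) (h2 : 0 < c₂) (h3 : 0 < c₃)
    (f : ℝ → ℝ)
    (hf : ∀ x, f x =
      -Real.log (c₂ * (Real.exp (-c₁ * x ^ 2) + 1 / (c₃ * |x| + 1))) + c₄) :
    Tendsto f atTop atTop ∧ Tendsto f atBot atTop ∧
      ∀ x, f x ≤ -Real.log c₂ + c₄ + Real.log (c₃ * |x| + 1) := by
  set S : ℝ → ℝ := fun x => Real.exp (-c₁ * x ^ 2) + 1 / (c₃ * |x| + 1) with hS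
  have hden : ∀ x : ℝ, 0 < c₃ * |x| + 1 := by
    intro x; positivity
  have hSpos : ∀ x : ℝ, 0 < S x := by
    intro x
    have := hden x
    positivity
  -- general tendsto lemma
  have key : ∀ l : Filter ℝ, Tendsto (fun x : ℝ => |x|) l atTop →
      Tendsto f l atTop := by
    intro l hl
    have h2' : Tendsto (fun x : ℝ => x ^ 2) l atTop := by
      have : ∀ x : ℝ, |x| ^ 2 = x ^ 2 := fun x => sq_abs x
      simpa [Function.comp_def, this] using (tendsto_pow_atTop (two_ne_zero)).comp hl
    have hexp : Tendsto (fun x : ℝ => Real.exp (-c₁ * x ^ 2)) l (nhds 0) := by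
      apply Real.tendsto_exp_atBot.comp
      have : Tendsto (fun x : ℝ => c₁ * x ^ 2) l atTop := h2'.const_mul_atTop h1
      have := tendsto_neg_atTop_atBot.comp this
      simpa [Function.comp_def] using this
    have hinv : Tendsto (fun x : ℝ => 1 / (c₃ * |x| + 1)) l (nhds 0) := by
      have hd : Tendsto (fun x : ℝ => c₃ * |x| + 1) l atTop :=
        tendsto_atTop_add_const_right _ 1 (hl.const_mul_atTop h3)
      simpa [one_div, Function.comp_def] using tendsto_inv_atTop_zero.comp hd
    have hS0 : Tendsto S l (nhds 0) := by
      simp only [hS, neg_mul, one_div]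
      simpa [neg_mul, one_div] using hexp.add hinv
    have hcS : Tendsto (fun x => c₂ * S x) l (nhdsWithin 0 (Set.Ioi 0)) := by
      rw [tendsto_nhdsWithin_iff]
      constructor
      · simpa only [mul_zero] using hS0.const_mul c₂
      · exact Eventually.of_forall fun x => mul_pos h2 (hSpos x)
    have hlog : Tendsto (fun x => Real.log (c₂ * S x)) l atBot :=
      Real.tendsto_log_nhdsGT_zero.comp hcS
    have : Tendsto (fun x => -Real.log (c₂ * S x) + c₄) l atTop :=
      tendsto_atTop_add_const_right _ c₄ (tendsto_neg_atBot_atTop.comp hlog)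
    exact this.congr fun x => (hf x).symm
  refine ⟨key atTop tendsto_abs_atTop_atTop, key atBot tendsto_abs_atBot_atTop, ?_⟩
  intro x
  rw [hf x, Real.log_mul h2.ne' (hSpos x).ne']
  have hSge : 1 / (c₃ * |x| + 1) ≤ S x := by
    have : 0 < Real.exp (-c₁ * x ^ 2) := Real.exp_pos _
    simp only [hS]; linarith
  have hlogS : -Real.log (c₃ * |x| + 1) ≤ Real.log (S x) := by
    have := Real.log_le_log (by positivity) hSge
    rwa [one_div, Real.log_inv] at this
  linarith
end
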